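/- For every ℓ ≥ 1: K̇^(ℓ)(x,x') = ρ'( K^(ℓ−1)(x,x') / √(u^(ℓ−1)) ), and ρ'(r̂_−^(ℓ)) ≤ K̇^(ℓ)(x,x') ≤ ρ'(1) = 1, where u^(ℓ) = (‖x‖² + ℓσ_b²)·(‖x'‖² + ℓσ_b²), r̂_−^(1) = −1, and r̂_−^(ℓ) = ρ(r̂_−^(ℓ−1))·(ℓ−2)/(ℓ−1) for ℓ ≥ 2. -/

import Mathlib

open Real

/-- The dual activation function of the scaled ReLU `φ(t) = √2·max(t,0)`. -/
noncomputable def rho (r : ℝ) : ℝ :=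
  (1 / π) * (Real.sqrt (1 - r ^ 2) + (π - Real.arccos r) * r)

/-- The dual activation function of the derivative of the scaled ReLU. -/
noncomputable def rhoPrime (r : ℝ) : ℝ := (π - Real.arccos r) / π

/-- The depth-`ℓ` NNGP kernel `K^(ℓ)` of a ReLU network with bias variance `σb²`,
defined recursively by `K^(0)(v,w) = ⟪v,w⟫` and
`K^(ℓ)(v,w) = √(K^(ℓ−1)(v,v)·K^(ℓ−1)(w,w))·ρ(K^(ℓ−1)(v,w)/√(K^(ℓ−1)(v,v)·K^(ℓ−1)(w,w))) + σb²`. -/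
noncomputable def Kker (σb : ℝ) {d : ℕ} :
    ℕ → EuclideanSpace ℝ (Fin d) → EuclideanSpace ℝ (Fin d) → ℝ
  | 0, v, w => (inner ℝ v w : ℝ)
  | ℓ + 1, v, w =>
      Real.sqrt (Kker σb ℓ v v * Kker σb ℓ w w) *
        rho (Kker σb ℓ v w / Real.sqrt (Kker σb ℓ v v * Kker σb ℓ w w)) + σb ^ 2

/-- `u^(ℓ) = (‖x‖² + ℓσ_b²)·(‖x'‖² + ℓσ_b²)`, stated for the norms `a = ‖x‖`, `b = ‖x'‖`. -/
noncomputable def uFun (σb a b : ℝ) (ℓ : ℕ) : ℝ :=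
  (a ^ 2 + ℓ * σb ^ 2) * (b ^ 2 + ℓ * σb ^ 2)

/-- `r̂_−^(1) = −1` and `r̂_−^(ℓ) = ρ(r̂_−^(ℓ−1))·(ℓ−2)/(ℓ−1)` for `ℓ ≥ 2`
(the value at `0` is junk). -/
noncomputable def rHatM : ℕ → ℝ
  | 0 => 0
  | 1 => -1
  | (n + 2) => rho (rHatM (n + 1)) * (n : ℝ) / ((n : ℝ) + 1)

/-- `K̇^(ℓ)(v,w) = ρ'( K^(ℓ−1)(v,w) / √(K^(ℓ−1)(v,v)·K^(ℓ−1)(w,w)) )` for `ℓ ≥ 1`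
(the value at `ℓ = 0` is junk). -/
noncomputable def Kdot (σb : ℝ) {d : ℕ} :
    ℕ → EuclideanSpace ℝ (Fin d) → EuclideanSpace ℝ (Fin d) → ℝ
  | 0, _, _ => 1
  | ℓ + 1, v, w =>
      rhoPrime (Kker σb ℓ v w / Real.sqrt (Kker σb ℓ v v * Kker σb ℓ w w))


lemma arccos_anti : Antitone Real.arccos := by
  intro a b h
  simp only [Real.arccos]
  linarith [Real.monotone_arcsin h]

lemma rhoPrime_mono : Monotone rhoPrime := by
  intro a b h
  unfold rhoPrime
  have := arccos_anti h
  have := Real.pi_pos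
  gcongr

lemma rhoPrime_le_one (r : ℝ) : rhoPrime r ≤ 1 := by
  unfold rhoPrime
  rw [div_le_one Real.pi_pos]
  linarith [Real.arccos_nonneg r]

lemma rhoPrime_one : rhoPrime 1 = 1 := by
  unfold rhoPrime
  rw [Real.arccos_one, sub_zero, div_self Real.pi_pos.ne']

lemma rho_one : rho 1 = 1 := by
  unfold rho
  rw [Real.arccos_one]
  have := Real.pi_pos
  norm_num

lemma rho_neg_one : rho (-1) = 0 := by
  unfold rho
  rw [Real.arccos_neg_one]
  norm_num

lemma rho_hasDerivAt {r : ℝ} (h1 : -1 < r) (h2 : r < 1) :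
    HasDerivAt rho ((π - Real.arccos r) / π) r := by
  have hr2 : (0:ℝ) < 1 - r ^ 2 := by nlinarith
  have hs : Real.sqrt (1 - r ^ 2) ≠ 0 := (Real.sqrt_pos.2 hr2).ne'
  have d1 : HasDerivAt (fun t : ℝ => 1 - t ^ 2) (-(2 * r)) r := by
    simpa using (hasDerivAt_pow 2 r).const_sub 1
  have d2 : HasDerivAt (fun t : ℝ => Real.sqrt (1 - t ^ 2))
      (1 / (2 * Real.sqrt (1 - r ^ 2)) * -(2 * r)) r :=
    (Real.hasDerivAt_sqrt hr2.ne').comp r d1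
  have d3 : HasDerivAt (fun t : ℝ => (π - Real.arccos t) * t)
      ((0 - -(1 / Real.sqrt (1 - r ^ 2))) * r + (π - Real.arccos r) * 1) r :=
    (((hasDerivAt_const r π).sub (Real.hasDerivAt_arccos h1.ne' h2.ne)).mul (hasDerivAt_id r))
  have d4 := ((d2.add d3).const_mul (1 / π))
  refine d4.congr_deriv ?_
  have hpi : π ≠ 0 := Real.pi_pos.ne'
  field_simp
  ring

lemma rho_monoOn : MonotoneOn rho (Set.Icc (-1 : ℝ) 1) := by
  have : StrictMonoOn rho (Set.Icc (-1 : ℝ) 1) := by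
    apply strictMonoOn_of_deriv_pos (convex_Icc _ _)
    · apply ContinuousOn.mul continuousOn_const
      apply ContinuousOn.add
      · exact (Real.continuous_sqrt.comp (by continuity)).continuousOn
      · exact ((continuousOn_const.sub Real.continuous_arccos.continuousOn).mul continuousOn_id)
    · intro t ht
      rw [interior_Icc] at ht
      rw [(rho_hasDerivAt ht.1 ht.2).deriv]
      have h1 : Real.arccos t < π := by
        have := Real.strictAntiOn_arccos (Set.mem_Icc.2 ⟨le_refl _, by linarith [ht.2]⟩)
          (Set.mem_Icc.2 ⟨ht.1.le, ht.2.le⟩) ht.1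
        rwa [Real.arccos_neg_one] at this
      exact div_pos (by linarith) Real.pi_pos
  exact this.monotoneOn

lemma rho_mem {r : ℝ} (h : r ∈ Set.Icc (-1 : ℝ) 1) : rho r ∈ Set.Icc (0 : ℝ) 1 := by
  constructor
  · rw [← rho_neg_one]
    exact rho_monoOn (Set.mem_Icc.2 ⟨le_refl _, by norm_num⟩) h h.1
  · rw [← rho_one]
    exact rho_monoOn h (Set.mem_Icc.2 ⟨by norm_num, le_refl _⟩) h.2

lemma rHatM_mem : ∀ ℓ : ℕ, rHatM (ℓ + 1) ∈ Set.Icc (-1 : ℝ) 1 := by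
  intro ℓ
  induction ℓ with
  | zero => simp [rHatM]
  | succ n ih =>
    have h := rho_mem ih
    have hd : (0:ℝ) < (n:ℝ) + 1 := by positivity
    show rho (rHatM (n + 1)) * (n : ℝ) / ((n : ℝ) + 1) ∈ Set.Icc (-1 : ℝ) 1
    constructor
    · have : (0:ℝ) ≤ rho (rHatM (n + 1)) * (n : ℝ) / ((n : ℝ) + 1) := by
        apply div_nonneg _ hd.le
        exact mul_nonneg h.1 (Nat.cast_nonneg n)
      linarith
    · rw [div_le_one hd]
      nlinarith [h.1, h.2, Nat.cast_nonneg (α := ℝ) n]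

lemma Kker_self (σb : ℝ) {d : ℕ} (v : EuclideanSpace ℝ (Fin d)) (hv : v ≠ 0) :
    ∀ ℓ : ℕ, Kker σb ℓ v v = ‖v‖ ^ 2 + ℓ * σb ^ 2 := by
  have hv2 : (0:ℝ) < ‖v‖ ^ 2 := by
    have := norm_pos_iff.2 hv
    positivity
  intro ℓ
  induction ℓ with
  | zero =>
    rw [show Kker σb 0 v v = (inner ℝ v v : ℝ) from rfl, real_inner_self_eq_norm_sq]
    norm_num
  | succ n ih =>
    have hK : (0:ℝ) < ‖v‖ ^ 2 + n * σb ^ 2 := by positivity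
    show Real.sqrt (Kker σb n v v * Kker σb n v v) *
        rho (Kker σb n v v / Real.sqrt (Kker σb n v v * Kker σb n v v)) + σb ^ 2 = _
    rw [ih, Real.sqrt_mul_self hK.le, div_self hK.ne', rho_one]
    push_cast
    ring

lemma poly_ineq (m a b s : ℝ) (hm : 0 ≤ m) (ha : 0 < a) (hb : 0 < b) (hs : 0 ≤ s) :
    m ^ 2 * ((a + m * s + s) * (b + m * s + s)) ≤ (m + 1) ^ 2 * ((a + m * s) * (b + m * s)) := by
  nlinarith [mul_nonneg (mul_nonneg hm (by positivity : (0:ℝ) ≤ a + (m + 1) * s)) hb.le,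
    mul_nonneg (mul_nonneg hm (by positivity : (0:ℝ) ≤ b + (m + 1) * s)) ha.le,
    mul_nonneg ha.le hb.le]

lemma Kkey (σb : ℝ) {d : ℕ} (x x' : EuclideanSpace ℝ (Fin d)) (hx : x ≠ 0) (hx' : x' ≠ 0) :
    ∀ ℓ : ℕ, |Kker σb ℓ x x'| ≤ Real.sqrt (uFun σb ‖x‖ ‖x'‖ ℓ) ∧
      rHatM (ℓ + 1) ≤ Kker σb ℓ x x' / Real.sqrt (uFun σb ‖x‖ ‖x'‖ ℓ) := by
  have ha : (0:ℝ) < ‖x‖ ^ 2 := by have := norm_pos_iff.2 hx; positivity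
  have hb : (0:ℝ) < ‖x'‖ ^ 2 := by have := norm_pos_iff.2 hx'; positivity
  have hu : ∀ ℓ : ℕ, (0:ℝ) < uFun σb ‖x‖ ‖x'‖ ℓ := by
    intro ℓ; unfold uFun; positivity
  have hsu : ∀ ℓ : ℕ, (0:ℝ) < Real.sqrt (uFun σb ‖x‖ ‖x'‖ ℓ) :=
    fun ℓ => Real.sqrt_pos.2 (hu ℓ)
  intro ℓ
  induction ℓ with
  | zero =>
    have habs : |Kker σb 0 x x'| ≤ Real.sqrt (uFun σb ‖x‖ ‖x'‖ 0) := by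
      have h1 : Real.sqrt (uFun σb ‖x‖ ‖x'‖ 0) = ‖x‖ * ‖x'‖ := by
        unfold uFun
        push_cast
        rw [zero_mul, add_zero, add_zero, ← mul_pow,
          Real.sqrt_sq (by positivity)]
      rw [h1]
      exact abs_real_inner_le_norm x x'
    refine ⟨habs, ?_⟩
    show (-1 : ℝ) ≤ _
    rw [le_div_iff₀ (hsu 0)]
    have := (abs_le.mp habs).1
    linarith
  | succ n ih =>
    set u := uFun σb ‖x‖ ‖x'‖ n with hudef
    set K := Kker σb n x x' with hKdef
    set A := ‖x‖ ^ 2 + (n:ℝ) * σb ^ 2 with hAdef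
    set B := ‖x'‖ ^ 2 + (n:ℝ) * σb ^ 2 with hBdef
    have hA : (0:ℝ) < A := by rw [hAdef]; positivity
    have hB : (0:ℝ) < B := by rw [hBdef]; positivity
    have huAB : u = A * B := rfl
    have hun1 : uFun σb ‖x‖ ‖x'‖ (n+1) = (A + σb ^ 2) * (B + σb ^ 2) := by
      unfold uFun
      rw [hAdef, hBdef]
      push_cast
      ring
    have hr : K / Real.sqrt u ∈ Set.Icc (-1:ℝ) 1 := by
      constructor
      · rw [le_div_iff₀ (hsu n)]; linarith [(abs_le.mp ih.1).1]
      · rw [div_le_one (hsu n)]; linarith [(abs_le.mp ih.1).2]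
    have hrho := rho_mem hr
    have hrho' := rho_mem (rHatM_mem n)
    have hmono := rho_monoOn (rHatM_mem n) hr ih.2
    have hKself1 := Kker_self σb x hx n
    have hKself2 := Kker_self σb x' hx' n
    have hKnext : Kker σb (n+1) x x' = Real.sqrt u * rho (K / Real.sqrt u) + σb ^ 2 := by
      show Real.sqrt (Kker σb n x x * Kker σb n x' x') *
        rho (Kker σb n x x' / Real.sqrt (Kker σb n x x * Kker σb n x' x')) + σb ^ 2 = _
      rw [hKself1, hKself2]
      rfl
    have hsqu : Real.sqrt u ^ 2 = u := Real.sq_sqrt (hu n).le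
    have hAM : Real.sqrt u ≤ (A + B) / 2 := by
      have h2 : u ≤ ((A + B) / 2) ^ 2 := by
        rw [huAB]; nlinarith [sq_nonneg (A - B)]
      calc Real.sqrt u ≤ Real.sqrt (((A + B) / 2) ^ 2) := Real.sqrt_le_sqrt h2
        _ = (A + B) / 2 := Real.sqrt_sq (by positivity)
    have hsq : Real.sqrt u + σb ^ 2 ≤ Real.sqrt (uFun σb ‖x‖ ‖x'‖ (n+1)) := by
      have h1 : (Real.sqrt u + σb ^ 2) ^ 2 ≤ uFun σb ‖x‖ ‖x'‖ (n+1) := by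
        rw [hun1]
        nlinarith [hsqu, (hsu n).le, sq_nonneg σb, huAB, hAM]
      calc Real.sqrt u + σb ^ 2 = Real.sqrt ((Real.sqrt u + σb ^ 2) ^ 2) := by
            rw [Real.sqrt_sq (by positivity)]
        _ ≤ _ := Real.sqrt_le_sqrt h1
    have hKpos : 0 ≤ Kker σb (n+1) x x' := by
      rw [hKnext]
      have := mul_nonneg (hsu n).le hrho.1
      nlinarith [sq_nonneg σb]
    have hKup : Kker σb (n+1) x x' ≤ Real.sqrt (uFun σb ‖x‖ ‖x'‖ (n+1)) := by
      rw [hKnext]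
      have : Real.sqrt u * rho (K / Real.sqrt u) ≤ Real.sqrt u * 1 :=
        mul_le_mul_of_nonneg_left hrho.2 (hsu n).le
      calc Real.sqrt u * rho (K / Real.sqrt u) + σb ^ 2 ≤ Real.sqrt u + σb ^ 2 := by linarith
        _ ≤ _ := hsq
    refine ⟨abs_le.2 ⟨by linarith [hsu (n+1), hKpos], hKup⟩, ?_⟩
    -- ratio lower bound
    have hratio : (n:ℝ) * Real.sqrt (uFun σb ‖x‖ ‖x'‖ (n+1)) ≤ ((n:ℝ) + 1) * Real.sqrt u := by
      have h1 : (n:ℝ) ^ 2 * uFun σb ‖x‖ ‖x'‖ (n+1) ≤ ((n:ℝ) + 1) ^ 2 * u := by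
        have := poly_ineq (n:ℝ) (‖x‖ ^ 2) (‖x'‖ ^ 2) (σb ^ 2)
          (Nat.cast_nonneg n) ha hb (sq_nonneg σb)
        rw [hun1, huAB, hAdef, hBdef]
        calc (n:ℝ) ^ 2 * ((A + σb ^ 2) * (B + σb ^ 2))
            = (n:ℝ) ^ 2 * ((‖x‖ ^ 2 + (n:ℝ) * σb ^ 2 + σb ^ 2) * (‖x'‖ ^ 2 + (n:ℝ) * σb ^ 2 + σb ^ 2)) := by
              rw [hAdef, hBdef]
          _ ≤ _ := this
      calc (n:ℝ) * Real.sqrt (uFun σb ‖x‖ ‖x'‖ (n+1))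
          = Real.sqrt ((n:ℝ) ^ 2 * uFun σb ‖x‖ ‖x'‖ (n+1)) := by
            rw [Real.sqrt_mul (sq_nonneg _), Real.sqrt_sq (Nat.cast_nonneg n)]
        _ ≤ Real.sqrt (((n:ℝ) + 1) ^ 2 * u) := Real.sqrt_le_sqrt h1
        _ = ((n:ℝ) + 1) * Real.sqrt u := by
            rw [Real.sqrt_mul (sq_nonneg _), Real.sqrt_sq (by positivity)]
    show rho (rHatM (n + 1)) * (n : ℝ) / ((n : ℝ) + 1) ≤ _
    rw [div_le_div_iff₀ (by positivity) (hsu (n+1))]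
    have hK1 : Real.sqrt u * rho (rHatM (n + 1)) ≤ Kker σb (n+1) x x' := by
      rw [hKnext]
      have := mul_le_mul_of_nonneg_left hmono (hsu n).le
      linarith [sq_nonneg σb]
    have h2 : rho (rHatM (n + 1)) * (n:ℝ) * Real.sqrt (uFun σb ‖x‖ ‖x'‖ (n+1)) ≤
        rho (rHatM (n + 1)) * (((n:ℝ) + 1) * Real.sqrt u) := by
      rw [mul_assoc]
      exact mul_le_mul_of_nonneg_left hratio hrho'.1
    have h3 : rho (rHatM (n + 1)) * (((n:ℝ) + 1) * Real.sqrt u) =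
        ((n:ℝ) + 1) * (Real.sqrt u * rho (rHatM (n + 1))) := by ring
    have h4 : ((n:ℝ) + 1) * (Real.sqrt u * rho (rHatM (n + 1))) ≤
        ((n:ℝ) + 1) * Kker σb (n+1) x x' :=
      mul_le_mul_of_nonneg_left hK1 (by positivity)
    linarith

/-- Lemma A.12 and Corollary A.13: for every `ℓ ≥ 1` (written `ℓ+1`),
`K̇^(ℓ)(x,x') = ρ'(K^(ℓ−1)(x,x')/√(u^(ℓ−1)))` and
`ρ'(r̂_−^(ℓ)) ≤ K̇^(ℓ)(x,x') ≤ ρ'(1) = 1`. -/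
theorem Kdot_form_and_bound (σb : ℝ) (hσb : 0 ≤ σb) {d : ℕ}
    (x x' : EuclideanSpace ℝ (Fin d)) (hx : x ≠ 0) (hx' : x' ≠ 0) :
    ∀ ℓ : ℕ,
      Kdot σb (ℓ + 1) x x' =
          rhoPrime (Kker σb ℓ x x' / Real.sqrt (uFun σb ‖x‖ ‖x'‖ ℓ)) ∧
      rhoPrime (rHatM (ℓ + 1)) ≤ Kdot σb (ℓ + 1) x x' ∧
      Kdot σb (ℓ + 1) x x' ≤ rhoPrime 1 ∧
      rhoPrime (1 : ℝ) = 1 := by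
  intro ℓ
  have hKself1 := Kker_self σb x hx ℓ
  have hKself2 := Kker_self σb x' hx' ℓ
  have hform : Kdot σb (ℓ + 1) x x' =
      rhoPrime (Kker σb ℓ x x' / Real.sqrt (uFun σb ‖x‖ ‖x'‖ ℓ)) := by
    show rhoPrime (Kker σb ℓ x x' / Real.sqrt (Kker σb ℓ x x * Kker σb ℓ x' x')) = _
    rw [hKself1, hKself2]
    rfl
  have hkey := Kkey σb x x' hx hx' ℓ
  refine ⟨hform, ?_, ?_, rhoPrime_one⟩
  · rw [hform]
    exact rhoPrime_mono hkey.2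
  · rw [hform, rhoPrime_one]
    exact rhoPrime_le_one _
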